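/- Let n ≥ 1 and let r = (r_{i,j})_{1≤i≤j≤n} be a family of nonnegative integers, extended by the convention r_{i,j} := 0 whenever i = 0 or j = n+1. Then there exists a representation M of the equioriented type A_n quiver over ℂ with r^M_{i,j} = r_{i,j} for all 1 ≤ i ≤ j ≤ n if and only if the following three conditions hold: (1) r_{i,j} ≥ r_{i,j+1} for all 1 ≤ i ≤ j < n; (2) r_{i−1,j} ≤ r_{i,j} for all 1 < i ≤ j ≤ n; (3) r_{i−1,j} − r_{i−1,j+1} ≤ r_{i,j} − r_{i,j+1} for all 1 < i ≤ j < n. -/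

import Mathlib

open Module

/-- A representation of the equioriented type `A_n` quiver over `ℂ`: finite-dimensional
complex vector spaces `V i` (only the indices `1 ≤ i ≤ n` carry content, the spaces at
index `0` and at indices `> n` are required to be trivial) together with linear maps
`f i : V i → V (i+1)`. -/
structure ARep (n : ℕ) where
  V : ℕ → Type
  [instAddCommGroup : ∀ i, AddCommGroup (V i)]
  [instModule : ∀ i, Module ℂ (V i)]
  [instFiniteDimensional : ∀ i, FiniteDimensional ℂ (V i)]
  f : ∀ i, V i →ₗ[ℂ] V (i + 1)
  triv : ∀ i, i = 0 ∨ n < i → Subsingleton (V i)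

attribute [instance] ARep.instAddCommGroup ARep.instModule ARep.instFiniteDimensional

namespace ARep

/-- The composite map `f_{i,i+k} : M_i → M_{i+k}` (the identity for `k = 0`). -/
noncomputable def F {n : ℕ} (M : ARep n) (i : ℕ) : (k : ℕ) → (M.V i →ₗ[ℂ] M.V (i + k))
  | 0 => LinearMap.id
  | (k + 1) => (M.f (i + k)).comp (M.F i k)

/-- The rank sequence `r^M_{i,j} = rank f_{i,j}`.  (For `i = 0` the source space is
trivial and for `j = n+1` the target space is trivial, so the conventions
`r^M_{0,·} = 0 = r^M_{·,n+1}` hold automatically.) -/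
noncomputable def r {n : ℕ} (M : ARep n) (i j : ℕ) : ℕ :=
  Module.finrank ℂ (LinearMap.range (M.F i (j - i)))

end ARep

/-- A morphism of representations of the equioriented type `A_n` quiver. -/
structure ARepHom {n : ℕ} (M N : ARep n) where
  φ : ∀ i, M.V i →ₗ[ℂ] N.V i
  comm : ∀ i, (φ (i + 1)).comp (M.f i) = (N.f i).comp (φ i)

/-- Two representations are isomorphic if there is a morphism all of whose components
are bijective. -/
def ARepIso {n : ℕ} (M N : ARep n) : Prop :=
  ∃ h : ARepHom M N, ∀ i, Function.Bijective (h.φ i)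

/-- The condition for the interval representation `U_{i,j}` to have a nonzero space at
vertex `k`. -/
def Ucond (n i j k : ℕ) : Prop := 1 ≤ k ∧ k ≤ n ∧ i ≤ k ∧ k ≤ j

instance (n i j k : ℕ) : Decidable (Ucond n i j k) := by unfold Ucond; infer_instance

/-- The space of `U_{i,j}` at vertex `k`, realized as a submodule of `ℂ`. -/
noncomputable def Uspace (n i j k : ℕ) : Submodule ℂ ℂ := if Ucond n i j k then ⊤ else ⊥

/-- The indecomposable interval representation `U_{i,j}` (for `1 ≤ i ≤ j ≤ n`):
one-dimensional at the vertices `i ≤ k ≤ j`, zero elsewhere, with identity structure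
maps inside the interval. -/
noncomputable def Urep (n i j : ℕ) : ARep n where
  V k := ↥(Uspace n i j k)
  f k := LinearMap.restrict
    (if Ucond n i j k ∧ Ucond n i j (k + 1) then (LinearMap.id : ℂ →ₗ[ℂ] ℂ) else 0)
    (p := Uspace n i j k) (q := Uspace n i j (k + 1))
    (by
      intro x hx
      by_cases h : Ucond n i j k ∧ Ucond n i j (k + 1)
      · rw [if_pos h]
        simp [Uspace, if_pos h.2]
      · rw [if_neg h]
        simp)
  triv k hk := by
    have hbot : Uspace n i j k = ⊥ := by
      simp only [Uspace]; rw [if_neg]; unfold Ucond; omega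
    have h0 := (Submodule.eq_bot_iff _).mp hbot
    exact ⟨fun a b => Subtype.ext ((h0 a.1 a.2).trans (h0 b.1 b.2).symm)⟩

/-- The componentwise direct sum of two representations. -/
noncomputable def ARep.dsum {n : ℕ} (M N : ARep n) : ARep n where
  V i := M.V i × N.V i
  f i := (M.f i).prodMap (N.f i)
  triv i hi := by
    haveI := M.triv i hi
    haveI := N.triv i hi
    exact ⟨fun a b => Prod.ext (Subsingleton.elim _ _) (Subsingleton.elim _ _)⟩

/-- A representation is nonzero if some vector space is nonzero. -/
def ARep.Nonzero {n : ℕ} (M : ARep n) : Prop := ∃ i, ∃ v : M.V i, v ≠ 0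

/-- The index set of segments `1 ≤ i ≤ j ≤ n`. -/
def SegIdx (n : ℕ) : Type :=
  {p : Fin (n + 1) × Fin (n + 1) // 1 ≤ p.1.1 ∧ p.1.1 ≤ p.2.1}

instance (n : ℕ) : Fintype (SegIdx n) := by unfold SegIdx; infer_instance

/-- The direct sum `⊕_{1 ≤ i ≤ j ≤ n} U_{i,j}^{⊕ m i j}`, taken componentwise. -/
noncomputable def sumU (n : ℕ) (m : ℕ → ℕ → ℕ) : ARep n where
  V k := ∀ p : SegIdx n, Fin (m p.1.1.1 p.1.2.1) → (Urep n p.1.1.1 p.1.2.1).V k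
  f k := LinearMap.pi fun p =>
    (((Urep n p.1.1.1 p.1.2.1).f k).compLeft (Fin (m p.1.1.1 p.1.2.1))).comp
      (LinearMap.proj p)
  triv k hk := by
    haveI := fun p : SegIdx n => (Urep n p.1.1.1 p.1.2.1).triv k hk
    exact ⟨fun a b => funext fun p => Subsingleton.elim _ _⟩

/-- The space of morphisms `Hom(M,N)` realized as a subspace of the product of the
spaces of componentwise linear maps. -/
noncomputable def HomSubspace {n : ℕ} (M N : ARep n) :
    Submodule ℂ (∀ k, M.V k →ₗ[ℂ] N.V k) where
  carrier := {φ | ∀ k, (φ (k + 1)).comp (M.f k) = (N.f k).comp (φ k)}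
  add_mem' := by
    intro a b ha hb k
    simp only [Pi.add_apply, LinearMap.add_comp, LinearMap.comp_add, ha k, hb k]
  zero_mem' := by
    intro k
    simp
  smul_mem' := by
    intro c a ha k
    simp only [Pi.smul_apply, LinearMap.smul_comp, LinearMap.comp_smul, ha k]

/-- The quotient of a representation by a family of subspaces stable under the
structure maps. -/
noncomputable def ARep.quot {n : ℕ} (M : ARep n) (S : ∀ k, Submodule ℂ (M.V k))
    (h : ∀ k, S k ≤ (S (k + 1)).comap (M.f k)) : ARep n where
  V k := M.V k ⧸ S k
  f k := Submodule.mapQ (S k) (S (k + 1)) (M.f k) (h k)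
  triv k hk := by
    haveI := M.triv k hk
    refine ⟨fun a b => ?_⟩
    obtain ⟨x, rfl⟩ := Submodule.Quotient.mk_surjective _ a
    obtain ⟨y, rfl⟩ := Submodule.Quotient.mk_surjective _ b
    exact congrArg _ (Subsingleton.elim x y)

/-- The quotient `M / ι(L)` of `M` by the image of a morphism `ι : L → M`. -/
noncomputable def quotByHom {n : ℕ} {L M : ARep n} (ι : ARepHom L M) : ARep n :=
  M.quot (fun k => LinearMap.range (ι.φ k)) (by
    intro k x hx
    obtain ⟨y, rfl⟩ := hx
    rw [Submodule.mem_comap]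
    exact ⟨L.f k y, LinearMap.congr_fun (ι.comm k) y⟩)

/-- The subrepresentation of `M` given by a family of subspaces stable under the
structure maps. -/
noncomputable def ARep.sub {n : ℕ} (M : ARep n) (N : ∀ i, Submodule ℂ (M.V i))
    (h : ∀ i, ∀ x ∈ N i, M.f i x ∈ N (i + 1)) : ARep n where
  V i := ↥(N i)
  f i := (M.f i).restrict (h i)
  triv i hi := by
    haveI := M.triv i hi
    exact ⟨fun a b => Subtype.ext (Subsingleton.elim _ _)⟩

/-- The subquotient representation `P/S` of `M`, for families of subspaces
`S k ≤ P k` both stable under the structure maps. -/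
noncomputable def ARep.subquot {n : ℕ} (M : ARep n) (P S : ∀ k, Submodule ℂ (M.V k))
    (hSP : ∀ k, S k ≤ P k)
    (hP : ∀ k, ∀ x ∈ P k, M.f k x ∈ P (k + 1))
    (hS : ∀ k, ∀ x ∈ S k, M.f k x ∈ S (k + 1)) : ARep n where
  V k := ↥(P k) ⧸ (S k).comap (P k).subtype
  f k := Submodule.mapQ _ _ ((M.f k).restrict (hP k)) (by
    intro x hx
    rw [Submodule.mem_comap] at hx ⊢
    exact hS k x.1 hx)
  triv k hk := by
    haveI := M.triv k hk
    haveI : Subsingleton (↥(P k)) := ⟨fun a b => Subtype.ext (Subsingleton.elim _ _)⟩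
    refine ⟨fun a b => ?_⟩
    obtain ⟨x, rfl⟩ := Submodule.Quotient.mk_surjective _ a
    obtain ⟨y, rfl⟩ := Submodule.Quotient.mk_surjective _ b
    exact congrArg _ (Subsingleton.elim x y)

/-- A `σ`-compatible `ε`-form on the underlying graded vector space of `M` making `M`
an `ε`-representation: a nondegenerate bilinear form `B` on `M^0 = ⊕_i M_i` with
`B v w = ε B w v`, with `B (M_i) (M_j) = 0` unless `i + j = n + 1` (i.e. `j = σ(i)`),
and anti-compatible with the structure maps. -/
structure EpsForm (n : ℕ) (M : ARep n) (ε : ℂ) where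
  B : (∀ i, M.V i) →ₗ[ℂ] (∀ i, M.V i) →ₗ[ℂ] ℂ
  nondeg : ∀ v, (∀ w, B v w = 0) → v = 0
  eps_symm : ∀ v w, B v w = ε * B w v
  graded : ∀ (i j : ℕ) (v : M.V i) (w : M.V j), i + j ≠ n + 1 →
    B (Pi.single i v) (Pi.single j w) = 0
  compat : ∀ i, 1 ≤ i → i + 1 ≤ n → ∀ (v : M.V i) (w : M.V (n - i)),
    B (Pi.single (i + 1) (M.f i v)) (Pi.single (n - i) w)
      + B (Pi.single i v) (Pi.single (n - i + 1) (M.f (n - i) w)) = 0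

/-- The orthogonal complement, at vertex `p`, of the image of a morphism `ι : L → M`
with respect to the form `E`. -/
noncomputable def perpAt {n : ℕ} {L M : ARep n} {ε : ℂ} (E : EpsForm n M ε)
    (ι : ARepHom L M) (p : ℕ) : Submodule ℂ (M.V p) where
  carrier := {y | ∀ (q : ℕ) (x : M.V q), x ∈ LinearMap.range (ι.φ q) →
    E.B (Pi.single p y) (Pi.single q x) = 0}
  add_mem' := by
    intro a b ha hb q x hx
    rw [Pi.single_add, map_add, LinearMap.add_apply, ha q x hx, hb q x hx, add_zero]
  zero_mem' := by
    intro q x hx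
    rw [Pi.single_zero, map_zero, LinearMap.zero_apply]
  smul_mem' := by
    intro c a ha q x hx
    rw [Pi.single_smul, map_smul, LinearMap.smul_apply, ha q x hx, smul_zero]


/-! ### Auxiliary material for the proof -/

namespace RankChar

/-! #### Forward direction: general facts about ranks of an `ARep` -/

/-- Cast equivalence between the spaces of a representation at equal indices. -/
noncomputable def castE {n : ℕ} (M : ARep n) : ∀ {a b : ℕ}, a = b → (M.V a ≃ₗ[ℂ] M.V b)
  | _, _, rfl => LinearEquiv.refl ℂ _

lemma f_cast {n : ℕ} (M : ARep n) {a b : ℕ} (h : a = b) (h' : a + 1 = b + 1) :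
    (M.f b).comp (castE M h).toLinearMap = (castE M h').toLinearMap.comp (M.f a) := by
  subst h
  rfl

lemma shiftF {n : ℕ} (M : ARep n) (i : ℕ) :
    ∀ k, ∀ (h : i + 1 + k = i + (k + 1)),
      M.F i (k + 1) =
        ((castE M h).toLinearMap.comp (M.F (i + 1) k)).comp (M.f i)
  | 0, h => by rfl
  | (k + 1), h => by
      have h0 : i + 1 + k = i + (k + 1) := by omega
      have : M.F i (k + 1 + 1) = (M.f (i + (k + 1))).comp (M.F i (k + 1)) := rfl
      rw [this, shiftF M i k h0]
      have hc := f_cast M h0 h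
      calc (M.f (i + (k + 1))).comp (((castE M h0).toLinearMap.comp
              (M.F (i + 1) k)).comp (M.f i))
          = (((M.f (i + (k + 1))).comp (castE M h0).toLinearMap).comp
              (M.F (i + 1) k)).comp (M.f i) := by
            simp only [LinearMap.comp_assoc]
        _ = (((castE M h).toLinearMap.comp (M.f (i + 1 + k))).comp
              (M.F (i + 1) k)).comp (M.f i) := by rw [hc]
        _ = ((castE M h).toLinearMap.comp (M.F (i + 1) (k + 1))).comp (M.f i) := by
            simp only [LinearMap.comp_assoc]; rfl

lemma finrank_range_castE_comp {n : ℕ} (M : ARep n) {a b c : ℕ} (h : a = b)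
    (g : M.V c →ₗ[ℂ] M.V a) :
    Module.finrank ℂ (LinearMap.range ((castE M h).toLinearMap.comp g)) =
      Module.finrank ℂ (LinearMap.range g) := by
  rw [LinearMap.range_comp]
  exact LinearEquiv.finrank_map_eq (castE M h) _

/-- finrank of a submodule plus nothing: rank of image plus kernel part. -/
lemma finrank_eq_map_add_inf_ker {V W : Type} [AddCommGroup V] [Module ℂ V]
    [FiniteDimensional ℂ V] [AddCommGroup W] [Module ℂ W]
    (g : V →ₗ[ℂ] W) (U : Submodule ℂ V) :
    Module.finrank ℂ U =
      Module.finrank ℂ (U.map g) + Module.finrank ℂ ↥(U ⊓ LinearMap.ker g) := by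
  have h1 := LinearMap.finrank_range_add_finrank_ker (g.comp U.subtype)
  rw [LinearMap.range_comp, Submodule.range_subtype] at h1
  have h2 : LinearMap.ker (g.comp U.subtype) =
      Submodule.comap U.subtype (U ⊓ LinearMap.ker g) := by
    rw [LinearMap.ker_comp]
    ext x
    simp [x.2]
  rw [h2] at h1
  rw [← h1, (Submodule.comapSubtypeEquivOfLe
    (inf_le_left : U ⊓ LinearMap.ker g ≤ U)).finrank_eq]

lemma sq_lemma {V W : Type} [AddCommGroup V] [Module ℂ V] [FiniteDimensional ℂ V]
    [AddCommGroup W] [Module ℂ W] [FiniteDimensional ℂ W]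
    (g : V →ₗ[ℂ] W) (W₁ W₂ : Submodule ℂ V) (h : W₁ ≤ W₂) :
    Module.finrank ℂ W₁ + Module.finrank ℂ (W₂.map g) ≤
      Module.finrank ℂ W₂ + Module.finrank ℂ (W₁.map g) := by
  have e1 := finrank_eq_map_add_inf_ker g W₁
  have e2 := finrank_eq_map_add_inf_ker g W₂
  have hm : Module.finrank ℂ ↥(W₁ ⊓ LinearMap.ker g) ≤
      Module.finrank ℂ ↥(W₂ ⊓ LinearMap.ker g) :=
    Submodule.finrank_mono (inf_le_inf_right _ h)
  omega

end RankChar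
namespace RankChar

/-! #### Backward direction: an explicit representation from the numbers `r` -/

variable (n : ℕ) (r : ℕ → ℕ → ℕ)

/-- `r` extended by the zero conventions. -/
def r' (i j : ℕ) : ℕ := if 1 ≤ i ∧ i ≤ j ∧ j ≤ n then r i j else 0

/-- The (integer) multiplicity of the interval `[a,b]`. -/
def g (a b : ℕ) : ℤ :=
  (r' n r a b : ℤ) - (r' n r a (b + 1) : ℤ) - (r' n r (a - 1) b : ℤ)
    + (r' n r (a - 1) (b + 1) : ℤ)

/-- The multiplicity of the interval `[a,b]` as a natural number. -/
def mult (a b : ℕ) : ℕ := (g n r a b).toNat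

/-- The index (basis) type: segments with multiplicity. -/
def Idx : Type := Σ p : SegIdx n, Fin (mult n r p.1.1.1 p.1.2.1)

instance : Fintype (Idx n r) := by unfold Idx SegIdx; infer_instance

def qa (q : Idx n r) : ℕ := q.1.1.1.1
def qb (q : Idx n r) : ℕ := q.1.1.2.1

lemma qa_pos (q : Idx n r) : 1 ≤ qa n r q := q.1.2.1
lemma qa_le_qb (q : Idx n r) : qa n r q ≤ qb n r q := q.1.2.2
lemma qb_le (q : Idx n r) : qb n r q ≤ n := Nat.lt_succ_iff.mp q.1.1.2.isLt

/-- The part of the basis alive at vertex `k`. -/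
def Tk (k : ℕ) : Type := {q : Idx n r // qa n r q ≤ k ∧ k ≤ qb n r q}

instance (k : ℕ) : Fintype (Tk n r k) := by unfold Tk; infer_instance

/-- The constructed representation. -/
noncomputable def myRep : ARep n where
  V k := Tk n r k → ℂ
  f k := {
    toFun := fun x s =>
      if h : qa n r s.1 ≤ k ∧ k ≤ qb n r s.1 then x ⟨s.1, h⟩ else 0
    map_add' := by
      intro x y; funext s
      by_cases h : qa n r s.1 ≤ k ∧ k ≤ qb n r s.1 <;> simp [h] <;> rfl
    map_smul' := by
      intro c x; funext s
      by_cases h : qa n r s.1 ≤ k ∧ k ≤ qb n r s.1 <;> simp [h] <;> rfl }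
  triv k hk := by
    have he : IsEmpty (Tk n r k) := ⟨fun s => by
      have h1 := qa_pos n r s.1
      have h2 := qb_le n r s.1
      have h3 := s.2
      omega⟩
    exact ⟨fun a b => funext fun s => (he.false s).elim⟩

lemma f_apply (k : ℕ) (x : Tk n r k → ℂ) (s : Tk n r (k + 1)) :
    (myRep n r).f k x s =
      if h : qa n r s.1 ≤ k ∧ k ≤ qb n r s.1 then x ⟨s.1, h⟩ else 0 := rfl

lemma F_apply (i : ℕ) :
    ∀ (k : ℕ) (x : Tk n r i → ℂ) (s : Tk n r (i + k)),
      (myRep n r).F i k x s =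
        if h : qa n r s.1 ≤ i then
          x ⟨s.1, h, le_trans (Nat.le_add_right i k) s.2.2⟩ else 0
  | 0, x, s => by
      rw [dif_pos (show qa n r s.1 ≤ i from s.2.1)]
      exact congrArg x (Subtype.ext rfl)
  | (k + 1), x, s => by
      have hstep : (myRep n r).F i (k + 1) x s =
          (myRep n r).f (i + k) ((myRep n r).F i k x) s := rfl
      rw [hstep]; erw [f_apply]
      by_cases hq : qa n r s.1 ≤ i
      · have hout : qa n r s.1 ≤ i + k ∧ i + k ≤ qb n r s.1 := by
          have := s.2.2; constructor <;> omega
        rw [dif_pos hout]; erw [F_apply i k]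
      · rw [dif_neg hq]
        by_cases hout : qa n r s.1 ≤ i + k ∧ i + k ≤ qb n r s.1
        · rw [dif_pos hout]; erw [F_apply i k]
          simp only [dif_neg hq]
        · rw [dif_neg hout]

/-- The segments alive on the whole interval `[i, j]`. -/
def Tsub (i j : ℕ) : Type := {q : Idx n r // qa n r q ≤ i ∧ j ≤ qb n r q}

instance (i j : ℕ) : Fintype (Tsub n r i j) := by unfold Tsub; infer_instance

/-- Extension by zero `(Tsub i (i+k) → ℂ) → (Tk (i+k) → ℂ)`. -/
noncomputable def Emap (i k : ℕ) : (Tsub n r i (i + k) → ℂ) →ₗ[ℂ] (Tk n r (i + k) → ℂ) where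
  toFun x s := if h : qa n r s.1 ≤ i then x ⟨s.1, h, s.2.2⟩ else 0
  map_add' := by
    intro x y; funext s
    by_cases h : qa n r s.1 ≤ i <;> simp [h] <;> rfl
  map_smul' := by
    intro c x; funext s
    by_cases h : qa n r s.1 ≤ i <;> simp [h] <;> rfl

def rho (i k : ℕ) : Tsub n r i (i + k) → Tk n r i :=
  fun q => ⟨q.1, q.2.1, le_trans (Nat.le_add_right i k) q.2.2⟩

lemma rho_inj (i k : ℕ) : Function.Injective (rho n r i k) := by
  intro a b h
  have : (rho n r i k a).1 = (rho n r i k b).1 := congrArg Subtype.val h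
  exact Subtype.ext this

lemma F_factor (i k : ℕ) :
    ((myRep n r).F i k : (Tk n r i → ℂ) →ₗ[ℂ] (Tk n r (i + k) → ℂ)) =
      (Emap n r i k).comp (LinearMap.funLeft ℂ ℂ (rho n r i k)) := by
  apply LinearMap.ext; intro x
  funext s
  erw [F_apply]
  show _ = if h : qa n r s.1 ≤ i then (LinearMap.funLeft ℂ ℂ (rho n r i k) x) ⟨s.1, h, s.2.2⟩ else 0
  by_cases h : qa n r s.1 ≤ i
  · rw [dif_pos h, dif_pos h]
    exact congrArg x (Subtype.ext rfl)
  · rw [dif_neg h, dif_neg h]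

lemma Emap_inj (i k : ℕ) : Function.Injective (Emap n r i k) := by
  rw [← LinearMap.ker_eq_bot]
  rw [LinearMap.ker_eq_bot']
  intro x hx
  funext q
  have hmem : qa n r q.1 ≤ i + k ∧ i + k ≤ qb n r q.1 := by
    have h1 := q.2.1; have h2 := q.2.2; constructor <;> omega
  have h := congrFun hx ⟨q.1, hmem⟩
  have h' : (if h : qa n r q.1 ≤ i then x ⟨q.1, h, hmem.2⟩ else 0) = 0 := h
  rw [dif_pos q.2.1] at h'
  show x q = 0
  calc x q = x ⟨q.1, q.2.1, hmem.2⟩ := congrArg x (Subtype.ext rfl)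
    _ = 0 := h' 

lemma rank_F (i k : ℕ) :
    Module.finrank ℂ (LinearMap.range ((myRep n r).F i k)) =
      Fintype.card (Tsub n r i (i + k)) := by
  erw [F_factor, LinearMap.range_comp,
    LinearMap.range_eq_top.mpr
      (LinearMap.funLeft_surjective_of_injective ℂ ℂ _ (rho_inj n r i k)),
    Submodule.map_top]
  have h1 : Module.finrank ℂ (LinearMap.range (Emap n r i k)) =
      Module.finrank ℂ (Tsub n r i (i + k) → ℂ) := by
    have h0 := LinearMap.finrank_range_add_finrank_ker (Emap n r i k)
    rwa [LinearMap.ker_eq_bot.mpr (Emap_inj n r i k), finrank_bot, Nat.add_zero] at h0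
  exact h1.trans (Module.finrank_pi ℂ)

end RankChar
namespace RankChar

variable (n : ℕ) (r : ℕ → ℕ → ℕ)

/-- Segments containing the interval `[i,j]`. -/
def SP (i j : ℕ) : Type := {p : SegIdx n // p.1.1.1 ≤ i ∧ j ≤ p.1.2.1}

instance (i j : ℕ) : Fintype (SP n i j) := by unfold SP SegIdx; infer_instance

def cardEquiv (i j : ℕ) :
    Tsub n r i j ≃ Σ p : SP n i j, Fin (mult n r p.1.1.1.1 p.1.1.2.1) where
  toFun q := ⟨⟨q.1.1, q.2⟩, q.1.2⟩
  invFun x := ⟨⟨x.1.1, x.2⟩, x.1.2⟩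
  left_inv q := rfl
  right_inv x := rfl

lemma card_Tsub (i j : ℕ) :
    Fintype.card (Tsub n r i j) = ∑ p : SP n i j, mult n r p.1.1.1.1 p.1.1.2.1 := by
  rw [Fintype.card_congr (cardEquiv n r i j), Fintype.card_sigma]
  simp

lemma sum_SP (i j : ℕ) (hi : 1 ≤ i) (hij : i ≤ j) (hj : j ≤ n) :
    ∑ p : SP n i j, mult n r p.1.1.1.1 p.1.1.2.1 =
      ∑ x ∈ Finset.Icc 1 i ×ˢ Finset.Icc j n, mult n r x.1 x.2 := by
  refine Finset.sum_bij' (fun p _ => (p.1.1.1.1, p.1.1.2.1))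
    (fun x hx => ⟨⟨(⟨x.1, ?_⟩, ⟨x.2, ?_⟩), ?_⟩, ?_⟩) ?_ ?_ ?_ ?_ ?_
  · rw [Finset.mem_product, Finset.mem_Icc, Finset.mem_Icc] at hx
    omega
  · rw [Finset.mem_product, Finset.mem_Icc, Finset.mem_Icc] at hx
    omega
  · rw [Finset.mem_product, Finset.mem_Icc, Finset.mem_Icc] at hx
    simp only []
    omega
  · rw [Finset.mem_product, Finset.mem_Icc, Finset.mem_Icc] at hx
    simp only []
    omega
  · intro p _
    rw [Finset.mem_product, Finset.mem_Icc, Finset.mem_Icc]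
    have h1 := p.1.2.1
    have h2 := p.2.1
    have h3 := p.2.2
    have h4 : p.1.1.2.1 ≤ n := Nat.lt_succ_iff.mp p.1.1.2.isLt
    exact ⟨⟨h1, h2⟩, h3, h4⟩
  · intro x hx
    exact Finset.mem_univ _
  · intro p _
    apply Subtype.ext
    apply Subtype.ext
    exact Prod.ext (Fin.ext rfl) (Fin.ext rfl)
  · intro x hx
    rfl
  · intro p _
    rfl

lemma r'_big (a b : ℕ) (hb : n < b) : r' n r a b = 0 := if_neg (by omega)

lemma F_finrank_congr {m : ℕ} (M : ARep m) (i : ℕ) {k k' : ℕ} (h : k = k') :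
    Module.finrank ℂ (LinearMap.range (M.F i k)) =
      Module.finrank ℂ (LinearMap.range (M.F i k')) := by subst h; rfl

lemma r'_zero_left (b : ℕ) : r' n r 0 b = 0 := if_neg (by omega)

section Hyps

variable
  (h1 : ∀ i j, 1 ≤ i → i ≤ j → j < n → r i (j + 1) ≤ r i j)
  (h2 : ∀ i j, 1 < i → i ≤ j → j ≤ n → r (i - 1) j ≤ r i j)
  (h3 : ∀ i j, 1 < i → i ≤ j → j < n →
    (r (i - 1) j : ℤ) - (r (i - 1) (j + 1) : ℤ) ≤ (r i j : ℤ) - (r i (j + 1) : ℤ))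

include h1 h2 h3 in
lemma g_nonneg (a b : ℕ) (ha : 1 ≤ a) (hab : a ≤ b) (hb : b ≤ n) : 0 ≤ g n r a b := by
  have hab' : r' n r a b = r a b := if_pos ⟨ha, hab, hb⟩
  unfold g
  by_cases ha1 : a = 1
  · subst ha1
    rw [hab', r'_zero_left, r'_zero_left]
    by_cases hbn : b = n
    · rw [r'_big n r 1 (b + 1) (by omega)]
      omega
    · rw [show r' n r 1 (b + 1) = r 1 (b + 1) from if_pos ⟨le_refl 1, by omega, by omega⟩]
      have := h1 1 b (by omega) (by omega) (by omega)
      omega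
  · have ha2 : 1 < a := by omega
    have e1 : r' n r (a - 1) b = r (a - 1) b := if_pos ⟨by omega, by omega, hb⟩
    by_cases hbn : b = n
    · rw [hab', e1, r'_big n r a (b + 1) (by omega), r'_big n r (a - 1) (b + 1) (by omega)]
      have := h2 a b ha2 hab hb
      omega
    · have e2 : r' n r a (b + 1) = r a (b + 1) := if_pos ⟨ha, by omega, by omega⟩
      have e3 : r' n r (a - 1) (b + 1) = r (a - 1) (b + 1) := if_pos ⟨by omega, by omega, by omega⟩
      rw [hab', e1, e2, e3]
      have := h3 a b ha2 hab (by omega)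
      omega

include h1 h2 h3 in
lemma mult_cast (a b : ℕ) (ha : 1 ≤ a) (hab : a ≤ b) (hb : b ≤ n) :
    ((mult n r a b : ℕ) : ℤ) = g n r a b :=
  Int.toNat_of_nonneg (g_nonneg n r h1 h2 h3 a b ha hab hb)

end Hyps

lemma sum_g_row (a j : ℕ) (hj : j ≤ n) :
    ∑ b ∈ Finset.Icc j n, g n r a b = (r' n r a j : ℤ) - (r' n r (a - 1) j : ℤ) := by
  rw [← Finset.Ico_add_one_right_eq_Icc, Finset.sum_Ico_eq_sum_range]
  set u : ℕ → ℤ := fun t => (r' n r a (j + t) : ℤ) - (r' n r (a - 1) (j + t) : ℤ) with hu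
  have hterm : ∀ t ∈ Finset.range (n + 1 - j), g n r a (j + t) = u t - u (t + 1) := by
    intro t _
    simp only [hu]
    unfold g
    push_cast
    ring
  rw [Finset.sum_congr rfl hterm, Finset.sum_range_sub' u]
  simp only [hu]
  rw [show j + (n + 1 - j) = n + 1 from by omega, Nat.add_zero,
    r'_big n r a (n + 1) (by omega), r'_big n r (a - 1) (n + 1) (by omega)]
  push_cast
  ring

lemma sum_mult
    (h1 : ∀ i j, 1 ≤ i → i ≤ j → j < n → r i (j + 1) ≤ r i j)
    (h2 : ∀ i j, 1 < i → i ≤ j → j ≤ n → r (i - 1) j ≤ r i j)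
    (h3 : ∀ i j, 1 < i → i ≤ j → j < n →
      (r (i - 1) j : ℤ) - (r (i - 1) (j + 1) : ℤ) ≤ (r i j : ℤ) - (r i (j + 1) : ℤ))
    (i j : ℕ) (hi : 1 ≤ i) (hij : i ≤ j) (hj : j ≤ n) :
    ∑ x ∈ Finset.Icc 1 i ×ˢ Finset.Icc j n, mult n r x.1 x.2 = r i j := by
  have key : ((∑ x ∈ Finset.Icc 1 i ×ˢ Finset.Icc j n, mult n r x.1 x.2 : ℕ) : ℤ)
      = (r i j : ℤ) := by
    rw [Nat.cast_sum,
      Finset.sum_product' (f := fun a b => ((mult n r a b : ℕ) : ℤ))]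
    have hrow : ∀ a ∈ Finset.Icc 1 i,
        ∑ b ∈ Finset.Icc j n, ((mult n r a b : ℕ) : ℤ) =
          (r' n r a j : ℤ) - (r' n r (a - 1) j : ℤ) := by
      intro a haa
      rw [Finset.mem_Icc] at haa
      have hterm : ∀ b ∈ Finset.Icc j n, ((mult n r a b : ℕ) : ℤ) = g n r a b := by
        intro b hbb
        rw [Finset.mem_Icc] at hbb
        exact mult_cast n r h1 h2 h3 a b (by omega) (by omega) (by omega)
      rw [Finset.sum_congr rfl hterm, sum_g_row n r a j hj]
    rw [Finset.sum_congr rfl hrow]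
    rw [← Finset.Ico_add_one_right_eq_Icc, Finset.sum_Ico_eq_sum_range]
    set u : ℕ → ℤ := fun t => (r' n r t j : ℤ) with hu
    have hterm : ∀ t ∈ Finset.range (i + 1 - 1),
        (r' n r (1 + t) j : ℤ) - (r' n r (1 + t - 1) j : ℤ) = u (t + 1) - u t := by
      intro t _
      simp only [hu]
      rw [Nat.add_comm 1 t, Nat.add_sub_cancel]
    rw [Finset.sum_congr rfl hterm, Finset.sum_range_sub u]
    simp only [hu]
    rw [show i + 1 - 1 = i from rfl, r'_zero_left,
      show r' n r i j = r i j from if_pos ⟨hi, hij, hj⟩]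
    push_cast
    ring
  exact_mod_cast key

lemma myRep_rank
    (h1 : ∀ i j, 1 ≤ i → i ≤ j → j < n → r i (j + 1) ≤ r i j)
    (h2 : ∀ i j, 1 < i → i ≤ j → j ≤ n → r (i - 1) j ≤ r i j)
    (h3 : ∀ i j, 1 < i → i ≤ j → j < n →
      (r (i - 1) j : ℤ) - (r (i - 1) (j + 1) : ℤ) ≤ (r i j : ℤ) - (r i (j + 1) : ℤ))
    (i j : ℕ) (hi : 1 ≤ i) (hij : i ≤ j) (hj : j ≤ n) :
    (myRep n r).r i j = r i j := by
  obtain ⟨k, rfl⟩ := Nat.exists_eq_add_of_le hij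
  rw [ARep.r, F_finrank_congr (myRep n r) i (show i + k - i = k from by omega),
    rank_F, card_Tsub, sum_SP n r i (i + k) hi hij hj]
  exact sum_mult n r h1 h2 h3 i (i + k) hi hij hj

end RankChar
namespace RankChar

lemma Mr_left {n : ℕ} (M : ARep n) (i k : ℕ) :
    M.r i (i + k) = Module.finrank ℂ (LinearMap.range (M.F i k)) := by
  rw [ARep.r, F_finrank_congr M i (show i + k - i = k from by omega)]

lemma rank_drop {n : ℕ} (M : ARep n) (i k : ℕ) :
    M.r i (i + k + 1) ≤ M.r i (i + k) := by
  have hA : M.r i (i + k + 1) =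
      Module.finrank ℂ (LinearMap.range ((M.f (i + k)).comp (M.F i k))) := Mr_left M i (k + 1)
  have hB : M.r i (i + k) = Module.finrank ℂ (LinearMap.range (M.F i k)) := Mr_left M i k
  rw [hA, hB, LinearMap.range_comp]
  exact Submodule.finrank_map_le _ _

lemma two_three {n : ℕ} (M : ARep n) (i k : ℕ) :
    M.r i (i + 1 + k) ≤ M.r (i + 1) (i + 1 + k) ∧
    (M.r i (i + 1 + k) : ℤ) - (M.r i (i + 1 + k + 1) : ℤ) ≤
      (M.r (i + 1) (i + 1 + k) : ℤ) - (M.r (i + 1) (i + 1 + k + 1) : ℤ) := by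
  have h0 : i + 1 + k = i + (k + 1) := by omega
  have h0'' : i + 1 + k + 1 = i + (k + 2) := by omega
  have hA : M.r i (i + 1 + k) =
      Module.finrank ℂ (LinearMap.range ((M.F (i + 1) k).comp (M.f i))) := by
    conv_lhs => rw [h0]
    rw [Mr_left M i (k + 1), shiftF M i k h0, LinearMap.comp_assoc]
    exact finrank_range_castE_comp M h0 _
  have hB : M.r (i + 1) (i + 1 + k) =
      Module.finrank ℂ (LinearMap.range (M.F (i + 1) k)) := Mr_left M (i + 1) k
  have hC : M.r (i + 1) (i + 1 + k + 1) =
      Module.finrank ℂ ((LinearMap.range (M.F (i + 1) k)).map (M.f (i + 1 + k))) := by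
    have e1 : M.r (i + 1) (i + 1 + k + 1) =
        Module.finrank ℂ (LinearMap.range ((M.f (i + 1 + k)).comp (M.F (i + 1) k))) :=
      Mr_left M (i + 1) (k + 1)
    rw [e1, LinearMap.range_comp]
  have hD : M.r i (i + 1 + k + 1) =
      Module.finrank ℂ
        ((LinearMap.range ((M.F (i + 1) k).comp (M.f i))).map (M.f (i + 1 + k))) := by
    have e2 : M.F i (k + 2) = ((castE M h0'').toLinearMap).comp
        ((M.f (i + 1 + k)).comp ((M.F (i + 1) k).comp (M.f i))) := by
      have e3 : M.F i (k + 2) = (M.f (i + (k + 1))).comp (M.F i (k + 1)) := rfl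
      rw [e3, shiftF M i k h0]
      simp only [← LinearMap.comp_assoc]
      rw [f_cast M h0 h0'']
    conv_lhs => rw [show i + 1 + k + 1 = i + (k + 2) from by omega]
    rw [Mr_left M i (k + 2), e2, finrank_range_castE_comp M h0'' _, LinearMap.range_comp]
  have hle : LinearMap.range ((M.F (i + 1) k).comp (M.f i)) ≤
      LinearMap.range (M.F (i + 1) k) := LinearMap.range_comp_le_range _ _
  constructor
  · rw [hA, hB]
    exact Submodule.finrank_mono hle
  · have hsq := sq_lemma (M.f (i + 1 + k))
      (LinearMap.range ((M.F (i + 1) k).comp (M.f i)))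
      (LinearMap.range (M.F (i + 1) k)) hle
    rw [hA, hB, hC, hD]
    omega

end RankChar
theorem rank_sequence_characterization (n : ℕ) (hn : 1 ≤ n) (r : ℕ → ℕ → ℕ) :
    (∃ M : ARep n, ∀ i j, 1 ≤ i → i ≤ j → j ≤ n → M.r i j = r i j) ↔
      ((∀ i j, 1 ≤ i → i ≤ j → j < n → r i (j + 1) ≤ r i j) ∧
       (∀ i j, 1 < i → i ≤ j → j ≤ n → r (i - 1) j ≤ r i j) ∧
       (∀ i j, 1 < i → i ≤ j → j < n →
         (r (i - 1) j : ℤ) - (r (i - 1) (j + 1) : ℤ) ≤ (r i j : ℤ) - (r i (j + 1) : ℤ))) := by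
  constructor
  · rintro ⟨M, hM⟩
    refine ⟨?_, ?_, ?_⟩
    · intro i j hi hij hjn
      obtain ⟨k, rfl⟩ := Nat.exists_eq_add_of_le hij
      rw [← hM i (i + k) hi hij (by omega), ← hM i (i + k + 1) hi (by omega) (by omega)]
      exact RankChar.rank_drop M i k
    · intro i j hi1 hij hjn
      obtain ⟨i', rfl⟩ : ∃ i', i = i' + 1 := ⟨i - 1, by omega⟩
      obtain ⟨k, rfl⟩ : ∃ k, j = i' + 1 + k := ⟨j - (i' + 1), by omega⟩
      have e : i' + 1 - 1 = i' := rfl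
      rw [e, ← hM i' (i' + 1 + k) (by omega) (by omega) hjn,
        ← hM (i' + 1) (i' + 1 + k) (by omega) (by omega) hjn]
      exact (RankChar.two_three M i' k).1
    · intro i j hi1 hij hjn
      obtain ⟨i', rfl⟩ : ∃ i', i = i' + 1 := ⟨i - 1, by omega⟩
      obtain ⟨k, rfl⟩ : ∃ k, j = i' + 1 + k := ⟨j - (i' + 1), by omega⟩
      have e : i' + 1 - 1 = i' := rfl
      rw [e,
        ← hM i' (i' + 1 + k) (by omega) (by omega) (by omega),
        ← hM (i' + 1) (i' + 1 + k) (by omega) (by omega) (by omega),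
        ← hM i' (i' + 1 + k + 1) (by omega) (by omega) (by omega),
        ← hM (i' + 1) (i' + 1 + k + 1) (by omega) (by omega) (by omega)]
      exact (RankChar.two_three M i' k).2
  · rintro ⟨h1, h2, h3⟩
    exact ⟨RankChar.myRep n r, fun i j hi hij hj =>
      RankChar.myRep_rank n r h1 h2 h3 i j hi hij hj⟩
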